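/- Let (X,p) be a 0-complete partial metric space and let A and B be nonempty sequentially closed subsets of X with X = A ∪ B. Let f : A → B and g : B → A be functions such that f(x) = g(x) for all x ∈ A ∩ B, and such that p(f(x), g(y)) ≤ α·p(x,y) for all x ∈ A and y ∈ B, where 0 < α < 1. Then there exists a unique x₀ ∈ A ∩ B such that f(x₀) = g(x₀) = x₀. -/

import Mathlib

open Filter Topology

/-- A partial metric on a type `X`. -/
structure IsPartialMetric {X : Type*} (p : X → X → ℝ) : Prop where
  nonneg : ∀ x y, 0 ≤ p x y
  symm : ∀ x y, p x y = p y x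
  eq_of : ∀ x y, p x x = p x y → p x y = p y y → x = y
  self_le : ∀ x y, p x x ≤ p x y
  triangle : ∀ x y z, p x z + p y y ≤ p x y + p y z

/-- A sequence `x` converges to `a` in the partial metric `p`:
`lim_{n→∞} p(a, x n) = p(a,a)`. -/
def PConverges {X : Type*} (p : X → X → ℝ) (x : ℕ → X) (a : X) : Prop :=
  Tendsto (fun n => p a (x n)) atTop (𝓝 (p a a))

/-- A sequence is `0`-Cauchy: `lim_{m,n→∞} p(x n, x m) = 0`. -/
def PZeroCauchy {X : Type*} (p : X → X → ℝ) (x : ℕ → X) : Prop :=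
  Tendsto (fun mn : ℕ × ℕ => p (x mn.1) (x mn.2)) atTop (𝓝 0)

/-- `(X,p)` is `0`-complete. -/
def PZeroComplete {X : Type*} (p : X → X → ℝ) : Prop :=
  ∀ x : ℕ → X, PZeroCauchy p x → ∃ a, PConverges p x a ∧ p a a = 0

/-- A set is sequentially closed with respect to `p`-convergence. -/
def SeqClosed {X : Type*} (p : X → X → ℝ) (A : Set X) : Prop :=
  ∀ (x : ℕ → X) (a : X), (∀ n, x n ∈ A) → PConverges p x a → a ∈ A

/-- A sequence is Cauchy in `(X,p)`: the double limit `lim_{m,n→∞} p(x n, x m)`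
exists (finite). -/
def PCauchy {X : Type*} (p : X → X → ℝ) (x : ℕ → X) : Prop :=
  ∃ L : ℝ, Tendsto (fun mn : ℕ × ℕ => p (x mn.1) (x mn.2)) atTop (𝓝 L)

/-- `(X,p)` is complete: every Cauchy sequence converges to some `a` with
`p(a,a) = lim_{m,n→∞} p(x n, x m)`. -/
def PComplete {X : Type*} (p : X → X → ℝ) : Prop :=
  ∀ x : ℕ → X, PCauchy p x → ∃ a, PConverges p x a ∧
    Tendsto (fun mn : ℕ × ℕ => p (x mn.1) (x mn.2)) atTop (𝓝 (p a a))

/-- Continuity of `T : X → X` with respect to the open `p`-balls. -/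
def PMContinuous {X : Type*} (p : X → X → ℝ) (T : X → X) : Prop :=
  ∀ x₀ : X, ∀ ε > (0:ℝ), ∃ δ > (0:ℝ), ∀ y,
    p x₀ y < p x₀ x₀ + δ → p (T x₀) (T y) < p (T x₀) (T x₀) + ε

/-- A set `A` is `0`-compact: every sequence in `A` has a subsequence converging
to some `a ∈ A` with `lim_{n→∞} p(x (k n), a) = p(a,a) = 0`. -/
def PZeroCompact {X : Type*} (p : X → X → ℝ) (A : Set X) : Prop :=
  ∀ x : ℕ → X, (∀ n, x n ∈ A) → ∃ (k : ℕ → ℕ) (a : X), StrictMono k ∧ a ∈ A ∧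
    Tendsto (fun n => p (x (k n)) a) atTop (𝓝 (p a a)) ∧ p a a = 0

set_option maxHeartbeats 1600000

/-- common fixed point of two maps `f : A → B`, `g : B → A`
agreeing on `A ∩ B` and satisfying a joint contraction condition. -/
theorem common_fixed_point_cyclic {X : Type*} (p : X → X → ℝ)
    (hp : IsPartialMetric p) (hcomp : PZeroComplete p)
    (A B : Set X) (hA : A.Nonempty) (hB : B.Nonempty)
    (hAcl : SeqClosed p A) (hBcl : SeqClosed p B) (hX : A ∪ B = Set.univ)
    (f g : X → X) (hf : ∀ x ∈ A, f x ∈ B) (hg : ∀ y ∈ B, g y ∈ A)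
    (hfg : ∀ x ∈ A ∩ B, f x = g x)
    (α : ℝ) (hα : 0 < α) (hα1 : α < 1)
    (hcontr : ∀ x ∈ A, ∀ y ∈ B, p (f x) (g y) ≤ α * p x y) :
    ∃! x₀, x₀ ∈ A ∩ B ∧ f x₀ = x₀ ∧ g x₀ = x₀ := by
  obtain ⟨x0, hx0⟩ := hA
  -- triangle without self term
  have tri : ∀ x y z, p x z ≤ p x y + p y z := by
    intro x y z
    have := hp.triangle x y z
    have := hp.nonneg y y
    linarith
  set s : ℕ → X := fun n => Nat.rec x0 (fun k xk => if Even k then f xk else g xk) n with hs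
  have hsucc : ∀ n, s (n+1) = if Even n then f (s n) else g (s n) := fun n => rfl
  have hmem : ∀ n, (Even n → s n ∈ A) ∧ (Odd n → s n ∈ B) := by
    intro n
    induction n with
    | zero =>
      constructor
      · intro _; exact hx0
      · intro h; exact absurd h (by decide)
    | succ k ih =>
      rcases Nat.even_or_odd k with hk | hk
      · have : s (k+1) = f (s k) := by rw [hsucc]; simp [hk]
        rw [this]
        constructor
        · intro h; exact absurd hk (Nat.even_add_one.mp h)
        · intro _; exact hf _ (ih.1 hk)
      · have hk' : ¬ Even k := Nat.not_even_iff_odd.mpr hk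
        have : s (k+1) = g (s k) := by rw [hsucc]; simp [hk']
        rw [this]
        constructor
        · intro _; exact hg _ (ih.2 hk)
        · intro h
          have h' := Nat.odd_iff.mp h
          have hk2 := Nat.odd_iff.mp hk
          omega
  set C : ℝ := p (s 0) (s 1) with hC
  have hC0 : 0 ≤ C := hp.nonneg _ _
  have hstep : ∀ n, p (s (n+1)) (s (n+2)) ≤ α * p (s n) (s (n+1)) := by
    intro n
    rcases Nat.even_or_odd n with hn | hn
    · have h1 : s (n+1) = f (s n) := by rw [hsucc]; simp [hn]
      have h2 : s (n+2) = g (s (n+1)) := by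
        rw [hsucc]
        have : ¬ Even (n+1) := by simp [Nat.even_add_one, hn]
        simp [this]
      rw [h2]
      calc p (s (n+1)) (g (s (n+1))) = p (f (s n)) (g (s (n+1))) := by rw [h1]
        _ ≤ α * p (s n) (s (n+1)) := hcontr _ ((hmem n).1 hn) _ ((hmem (n+1)).2 hn.add_one)
    · have hn' : ¬ Even n := Nat.not_even_iff_odd.mpr hn
      have h1 : s (n+1) = g (s n) := by rw [hsucc]; simp [hn']
      have h2 : s (n+2) = f (s (n+1)) := by
        rw [hsucc]
        have : Even (n+1) := by simp [Nat.even_add_one, hn']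
        simp [this]
      have hA1 : s (n+1) ∈ A := (hmem (n+1)).1 (by simp [Nat.even_add_one, hn'])
      have hB0 : s n ∈ B := (hmem n).2 hn
      calc p (s (n+1)) (s (n+2)) = p (f (s (n+1))) (g (s n)) := by
            rw [h2, h1, hp.symm]
        _ ≤ α * p (s (n+1)) (s n) := hcontr _ hA1 _ hB0
        _ = α * p (s n) (s (n+1)) := by rw [hp.symm]
  have hgeo : ∀ n, p (s n) (s (n+1)) ≤ α ^ n * C := by
    intro n
    induction n with
    | zero => simp [hC]
    | succ k ih =>
      calc p (s (k+1)) (s (k+2)) ≤ α * p (s k) (s (k+1)) := hstep k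
        _ ≤ α * (α ^ k * C) := by nlinarith
        _ = α ^ (k+1) * C := by ring
  have h1α : 0 < 1 - α := by linarith
  -- Cauchy bound
  have hbound : ∀ k n, p (s n) (s (n+k)) ≤ α ^ n * C / (1 - α) := by
    intro k
    induction k with
    | zero =>
      intro n
      have h1 : p (s n) (s n) ≤ p (s n) (s (n+1)) := hp.self_le _ _
      have h2 := hgeo n
      simp only [Nat.add_zero]
      rw [le_div_iff₀ h1α]
      have hpow : 0 ≤ α ^ n * C := mul_nonneg (pow_nonneg hα.le n) hC0
      have hnn := hp.nonneg (s n) (s n)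
      nlinarith [mul_nonneg hnn hα.le]
    | succ k ih =>
      intro n
      have h1 : p (s n) (s (n + (k+1))) ≤ p (s n) (s (n+1)) + p (s (n+1)) (s (n+1+k)) := by
        have := tri (s n) (s (n+1)) (s (n+1+k))
        have he : n + (k+1) = n+1+k := by ring
        rw [he]; exact this
      have h2 := ih (n+1)
      have h3 := hgeo n
      rw [le_div_iff₀ h1α] at h2 ⊢
      have : α ^ (n+1) = α ^ n * α := by ring
      nlinarith [pow_nonneg hα.le n, hp.nonneg (s (n+1)) (s (n+1+k))]
  have hbound' : ∀ m n, p (s n) (s m) ≤ α ^ (min n m) * C / (1-α) := by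
    intro m n
    rcases le_total n m with h | h
    · have := hbound (m - n) n
      rw [Nat.add_sub_cancel' h] at this
      rwa [min_eq_left h]
    · have := hbound (n - m) m
      rw [Nat.add_sub_cancel' h] at this
      rw [min_eq_right h, hp.symm]
      exact this
  -- the bound function tends to 0
  have hDto : Tendsto (fun n : ℕ => α ^ n * C / (1-α)) atTop (𝓝 0) := by
    have := tendsto_pow_atTop_nhds_zero_of_lt_one hα.le hα1
    have h := (this.mul_const C).div_const (1-α)
    simpa using h
  have hmin : Tendsto (fun mn : ℕ × ℕ => min mn.1 mn.2) atTop atTop := by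
    rw [tendsto_atTop]
    intro b
    filter_upwards [Filter.eventually_ge_atTop ((b, b) : ℕ × ℕ)] with mn hmn
    exact le_min hmn.1 hmn.2
  have hcauchy : PZeroCauchy p s := by
    unfold PZeroCauchy
    exact squeeze_zero (fun mn => hp.nonneg _ _) (fun mn => hbound' mn.2 mn.1)
      (hDto.comp hmin)
  obtain ⟨a, hconv, haa⟩ := hcomp s hcauchy
  have hconv0 : Tendsto (fun n => p a (s n)) atTop (𝓝 0) := haa ▸ hconv
  have h2n : Tendsto (fun n : ℕ => 2*n) atTop atTop :=
    Filter.tendsto_atTop_atTop.mpr (fun b => ⟨b, fun n hn => by omega⟩)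
  have h2n1 : Tendsto (fun n : ℕ => 2*n+1) atTop atTop :=
    Filter.tendsto_atTop_atTop.mpr (fun b => ⟨b, fun n hn => by omega⟩)
  have haA : a ∈ A := by
    apply hAcl (fun n => s (2*n)) a (fun n => (hmem (2*n)).1 ⟨n, by ring⟩)
    unfold PConverges
    rw [haa]
    exact hconv0.comp h2n
  have haB : a ∈ B := by
    apply hBcl (fun n => s (2*n+1)) a (fun n => (hmem (2*n+1)).2 ⟨n, by ring⟩)
    unfold PConverges
    rw [haa]
    exact hconv0.comp h2n1
  -- f a = a
  have hfa0 : p (f a) a = 0 := by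
    have hb : ∀ n : ℕ, p (f a) a ≤ α * p a (s (2*n+1)) + p a (s (2*n+2)) := by
      intro n
      have hgodd : s (2*n+2) = g (s (2*n+1)) := by
        rw [hsucc]
        have : ¬ Even (2*n+1) := by simp [Nat.even_add_one]
        simp [this]
      have h1 : p (f a) (s (2*n+2)) ≤ α * p a (s (2*n+1)) := by
        rw [hgodd]
        exact hcontr _ haA _ ((hmem (2*n+1)).2 ⟨n, by ring⟩)
      have h2 := tri (f a) (s (2*n+2)) a
      have h3 : p (s (2*n+2)) a = p a (s (2*n+2)) := hp.symm _ _
      linarith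
    have htend : Tendsto (fun n : ℕ => α * p a (s (2*n+1)) + p a (s (2*n+2)))
        atTop (𝓝 0) := by
      have ha1 : Tendsto (fun n : ℕ => p a (s (2*n+1))) atTop (𝓝 0) :=
        hconv0.comp h2n1
      have h2n2 : Tendsto (fun n : ℕ => 2*n+2) atTop atTop :=
        Filter.tendsto_atTop_atTop.mpr (fun b => ⟨b, fun n hn => by omega⟩)
      have ha2 : Tendsto (fun n : ℕ => p a (s (2*n+2))) atTop (𝓝 0) :=
        hconv0.comp h2n2
      have := (ha1.const_mul α).add ha2
      simpa using this
    have hle : p (f a) a ≤ 0 := ge_of_tendsto' htend hb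
    exact le_antisymm hle (hp.nonneg _ _)
  have hfafa : p (f a) (f a) = 0 :=
    le_antisymm (by rw [← hfa0]; exact hp.self_le _ _) (hp.nonneg _ _)
  have hfa : f a = a := hp.eq_of _ _ (by rw [hfafa, hfa0]) (by rw [hfa0, haa])
  have hga : g a = a := by rw [← hfg a ⟨haA, haB⟩]; exact hfa
  refine ⟨a, ⟨⟨haA, haB⟩, hfa, hga⟩, ?_⟩
  rintro y ⟨⟨hyA, hyB⟩, hfy, hgy⟩
  have h1 : p (f a) (g y) ≤ α * p a y := hcontr _ haA _ hyB
  rw [hfa, hgy] at h1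
  have h2 : p a y = 0 := by nlinarith [hp.nonneg a y]
  have h3 : p y y = 0 := le_antisymm
    (by rw [← h2, hp.symm a y]; exact hp.self_le _ _) (hp.nonneg _ _)
  exact (hp.eq_of a y (by rw [haa, h2]) (by rw [h2, h3])).symm
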